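/- Let (R, m) be a Noetherian local ring of positive dimension and let H = ⋃_{n>0} (0 :_R m^n) be the zeroth local cohomology ideal. If I is an ideal containing H such that I/H is a trace ideal of R/H containing a non-zerodivisor of R/H, then I is a trace ideal of R. -/

import Mathlib

/-- The trace ideal of an `R`-module `M`. -/
def traceIdeal (R : Type*) [CommRing R] (M : Type*) [AddCommGroup M] [Module R M] : Ideal R :=
  ⨆ f : M →ₗ[R] R, LinearMap.range f

/-- Let `(R, m)` be a Noetherian local ring of positive dimension and let
`H = ⋃_{n>0} (0 :_R m^n)` be the zeroth local cohomology ideal. If `I ⊇ H` is an ideal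
such that `I/H` is a trace ideal of `R/H` containing a non-zerodivisor of `R/H`, then `I`
is a trace ideal of `R`. -/
theorem traceIdeal_of_quotient_zeroth_local_cohomology (R : Type*) [CommRing R]
    [IsNoetherianRing R] [IsLocalRing R] (hdim : 0 < ringKrullDim R)
    (H : Ideal R)
    (hH : H = ⨆ n : ℕ, Submodule.colon ⊥ (((IsLocalRing.maximalIdeal R) ^ (n + 1) : Ideal R) : Set R))
    (I : Ideal R) (hHI : H ≤ I)
    (htr : traceIdeal (R ⧸ H) (I.map (Ideal.Quotient.mk H)) = I.map (Ideal.Quotient.mk H))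
    (hreg : ∃ x ∈ I.map (Ideal.Quotient.mk H), x ∈ nonZeroDivisors (R ⧸ H)) :
    traceIdeal R I = I := by
  classical
  apply le_antisymm
  · apply iSup_le
    intro f
    rintro _ ⟨x, rfl⟩
    -- Step 1: f maps H ∩ I into H
    have hmono : Monotone (fun n : ℕ => Submodule.colon (⊥ : Submodule R R)
        (((IsLocalRing.maximalIdeal R) ^ (n + 1) : Ideal R) : Set R)) := by
      intro a b hab
      exact Submodule.colon_mono le_rfl (SetLike.coe_subset_coe.mpr (Ideal.pow_le_pow_right (by omega)))
    have hfH : ∀ z : ↥I, (z : R) ∈ H → f z ∈ H := by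
      intro z hz
      rw [hH] at hz ⊢
      obtain ⟨n, hn⟩ := (Submodule.mem_iSup_of_directed _ hmono.directed_le).1 hz
      refine Submodule.mem_iSup_of_mem n ?_
      rw [Submodule.mem_colon] at hn ⊢
      intro p hp
      have hpz : p • z = (0 : ↥I) := by
        ext
        have := hn p hp
        simpa [smul_eq_mul, mul_comm] using this
      have : f z • p = p • f z := by rw [smul_eq_mul, smul_eq_mul, mul_comm]
      rw [this, ← map_smul, hpz, map_zero]
      exact Submodule.zero_mem _
    -- Step 2: descend f to a map on I/H
    set J := I.map (Ideal.Quotient.mk H) with hJ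
    let p : ↥I →ₗ[R] ↥J :=
      { toFun := fun z => ⟨Ideal.Quotient.mk H z, Ideal.mem_map_of_mem _ z.2⟩
        map_add' := by intro a b; ext; simp
        map_smul' := by
          intro a b; ext
          simp [Algebra.smul_def, Submodule.coe_smul_of_tower, Ideal.Quotient.algebraMap_eq] }
    have hpsurj : Function.Surjective p := by
      rintro ⟨y, hy⟩
      obtain ⟨x, hx, rfl⟩ := Ideal.mem_map_iff_of_surjective _ Ideal.Quotient.mk_surjective |>.1 hy
      exact ⟨⟨x, hx⟩, rfl⟩
    let F : ↥I →ₗ[R] R ⧸ H := H.mkQ ∘ₗ f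
    have hker : LinearMap.ker p ≤ LinearMap.ker F := by
      intro z hz
      have hzH : (z : R) ∈ H := by
        have : Ideal.Quotient.mk H (z : R) = 0 := congrArg Subtype.val hz
        exact (Ideal.Quotient.eq_zero_iff_mem).1 this
      have := hfH z hzH
      simpa [F, Submodule.Quotient.mk_eq_zero] using (Submodule.Quotient.mk_eq_zero H).2 this
    let e := p.quotKerEquivOfSurjective hpsurj
    let g' : ↥J →ₗ[R] R ⧸ H :=
      (Submodule.liftQ (LinearMap.ker p) F hker) ∘ₗ e.symm.toLinearMap
    have hg' : ∀ z : ↥I, g' (p z) = F z := by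
      intro z
      have he : e (Submodule.Quotient.mk z) = p z := rfl
      have : e.symm (p z) = Submodule.Quotient.mk z := by
        rw [← he, LinearEquiv.symm_apply_apply]
      simp [g', this]
    let g : ↥J →ₗ[R ⧸ H] R ⧸ H :=
      g'.extendScalarsOfSurjective Ideal.Quotient.mk_surjective
    -- Step 3: use the trace ideal hypothesis
    have hmem : g' (p x) ∈ J :=
      htr.le (le_iSup (fun (g : ↥J →ₗ[R ⧸ H] R ⧸ H) => LinearMap.range g) g ⟨p x, rfl⟩)
    have : Ideal.Quotient.mk H (f x) ∈ J := by
      have h2 := hg' x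
      exact h2 ▸ hmem
    obtain ⟨y, hy, hyx⟩ := Ideal.mem_map_iff_of_surjective _ Ideal.Quotient.mk_surjective |>.1 this
    have : f x - y ∈ H := by
      rw [← Ideal.Quotient.eq_zero_iff_mem, map_sub, hyx, sub_self]
    have : f x = y + (f x - y) := by ring
    rw [this]
    exact I.add_mem hy (hHI ‹f x - y ∈ H›)
  · have h := le_iSup (fun (f : ↥I →ₗ[R] R) => LinearMap.range f) I.subtype
    simpa [traceIdeal] using h
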